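/- Every continuous one-parameter compact subgroup (i.e. every subgroup isomorphic to the circle group U(1)) of the three-dimensional Lorentz group O(1,2) fixes a timelike vector; consequently, the three-dimensional Minkowski space ℝ^{1,2} decomposes under such a subgroup into an orthogonal direct sum of an invariant one-dimensional timelike subspace and an invariant two-dimensional spacelike subspace. -/

import Mathlib

open MeasureTheory


/-- The Minkowski form on ℝ^{1,2}. -/
noncomputable def eta (x y : Fin 3 → ℝ) : ℝ := -(x 0 * y 0) + x 1 * y 1 + x 2 * y 2

noncomputable instance : MeasurableSpace Circle := borel Circle
instance : BorelSpace Circle := ⟨rfl⟩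
instance : ConnectedSpace Circle :=
  Function.Surjective.connectedSpace (fun z => ⟨Complex.arg z, Circle.exp_arg z⟩)
    Circle.exp.continuous


lemma eta_perp_spacelike (v w : Fin 3 → ℝ) (htimelike : eta v v < 0)
    (hw : eta v w = 0) (hwne : w ≠ 0) : 0 < eta w w := by
  have hv' : (v 1) ^ 2 + (v 2) ^ 2 < (v 0) ^ 2 := by
    simp only [eta] at htimelike; nlinarith
  have hv0ne : v 0 ≠ 0 := by
    intro h; rw [h] at hv'; nlinarith [sq_nonneg (v 1), sq_nonneg (v 2)]
  simp only [eta] at hw ⊢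
  by_cases h12 : w 1 = 0 ∧ w 2 = 0
  · exfalso
    apply hwne
    have hw0 : w 0 = 0 := by
      rw [h12.1, h12.2] at hw
      have : v 0 * w 0 = 0 := by linarith
      exact (mul_eq_zero.mp this).resolve_left hv0ne
    funext i
    fin_cases i
    · exact hw0
    · exact h12.1
    · exact h12.2
  · have h12' : 0 < (w 1) ^ 2 + (w 2) ^ 2 := by
      rcases not_and_or.mp h12 with h | h
      · have := sq_nonneg (w 2); positivity
      · have := sq_nonneg (w 1); positivity
    have hcs : (v 1 * w 1 + v 2 * w 2) ^ 2 ≤ ((v 1)^2 + (v 2)^2) * ((w 1)^2 + (w 2)^2) := by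
      nlinarith [sq_nonneg (v 1 * w 2 - v 2 * w 1)]
    have heq : v 0 * w 0 = v 1 * w 1 + v 2 * w 2 := by linarith
    have h4 : (v 0)^2 * (w 0)^2 < (v 0)^2 * ((w 1)^2 + (w 2)^2) := by
      have h5 : (v 0 * w 0)^2 ≤ ((v 1)^2 + (v 2)^2) * ((w 1)^2 + (w 2)^2) := by
        rw [heq]; exact hcs
      nlinarith
    have h5 : (w 0)^2 < (w 1)^2 + (w 2)^2 := by
      have hv0sq : 0 < (v 0)^2 := by positivity
      exact lt_of_mul_lt_mul_left h4 hv0sq.le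
    nlinarith

lemma eta_decomp (v x : Fin 3 → ℝ) (hvv : eta v v ≠ 0) :
    ∃ (a : ℝ) (w : Fin 3 → ℝ), eta v w = 0 ∧ x = a • v + w := by
  refine ⟨eta v x / eta v v, x - (eta v x / eta v v) • v, ?_, by abel⟩
  simp only [eta, Pi.sub_apply, Pi.smul_apply, smul_eq_mul] at *
  linear_combination (-1 : ℝ) * div_mul_cancel₀ (-(v 0 * x 0) + v 1 * x 1 + v 2 * x 2) hvv


/-- Every continuous subgroup of O(1,2) isomorphic to the circle group U(1)
fixes a timelike vector, and ℝ^{1,2} decomposes into an orthogonal sum of an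
invariant timelike line and an invariant spacelike plane. -/
theorem stmt_1 (φ : Circle →* ((Fin 3 → ℝ) ≃ₗ[ℝ] (Fin 3 → ℝ)))
    (hcont : ∀ x, Continuous fun z => φ z x)
    (hinj : Function.Injective φ)
    (hpres : ∀ z x y, eta (φ z x) (φ z y) = eta x y) :
    ∃ v : Fin 3 → ℝ, eta v v < 0 ∧ (∀ z, φ z v = v) ∧
      (∀ w, eta v w = 0 → w ≠ 0 → 0 < eta w w) ∧
      (∀ z w, eta v w = 0 → eta v (φ z w) = 0) ∧
      (∀ x : Fin 3 → ℝ, ∃ (a : ℝ) (w : Fin 3 → ℝ), eta v w = 0 ∧ x = a • v + w) := by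
  classical
  set μ : Measure Circle := Measure.haar with hμ
  set e : Fin 3 → ℝ := ![1, 0, 0] with he
  set f : Circle → (Fin 3 → ℝ) := fun z => φ z e with hf
  have hfc : Continuous f := hcont e
  have hfci : ∀ i : Fin 3, Continuous fun z => f z i := fun i =>
    (continuous_apply i).comp hfc
  have hint : Integrable f μ :=
    hfc.integrable_of_hasCompactSupport (HasCompactSupport.of_compactSpace f)
  have hinti : ∀ i : Fin 3, Integrable (fun z => f z i) μ := fun i =>
    (hfci i).integrable_of_hasCompactSupport (HasCompactSupport.of_compactSpace _)
  -- the orbit consists of unit timelike vectors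
  have hnorm : ∀ z, (f z 0) ^ 2 = 1 + (f z 1) ^ 2 + (f z 2) ^ 2 := by
    intro z
    have h := hpres z e e
    have he' : eta e e = -1 := by simp [eta, he]
    rw [he'] at h
    simp only [eta, hf] at h ⊢
    nlinarith [h]
  -- positivity of the 0-component, by connectedness
  have hpos : ∀ z, 1 ≤ f z 0 := by
    have hne : ∀ z, f z 0 ≠ 0 := by
      intro z h0
      have := hnorm z
      rw [h0] at this
      nlinarith [sq_nonneg (f z 1), sq_nonneg (f z 2)]
    have h1 : f 1 0 = 1 := by
      have : φ 1 = 1 := map_one φ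
      simp [hf, this, he]
    have hgt : ∀ z, 0 < f z 0 := by
      intro z
      by_contra hle
      push_neg at hle
      have hzlt : f z 0 < 0 := lt_of_le_of_ne hle (hne z)
      have : (0 : ℝ) ∈ Set.range fun z => f z 0 := by
        apply intermediate_value_univ z 1 (hfci 0)
        constructor
        · exact hzlt.le
        · rw [h1]; norm_num
      obtain ⟨z', hz'⟩ := this
      exact hne z' hz'
    intro z
    nlinarith [hnorm z, hgt z, sq_nonneg (f z 1), sq_nonneg (f z 2)]
  -- the averaged vector
  set v : Fin 3 → ℝ := ∫ z, f z ∂μ with hv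
  have hcomp : ∀ i : Fin 3, v i = ∫ z, f z i ∂μ := by
    intro i
    have := (ContinuousLinearMap.integral_comp_comm (ContinuousLinearMap.proj (R := ℝ)
      (φ := fun _ : Fin 3 => ℝ) i) hint).symm
    simpa using this
  -- v is fixed by the whole group
  have hfix : ∀ z, φ z v = v := by
    intro w
    have hL := LinearEquiv.toContinuousLinearEquiv (φ w)
    have key : φ w v = ∫ z, φ w (f z) ∂μ := by
      have := (ContinuousLinearEquiv.integral_comp_comm
        (LinearEquiv.toContinuousLinearEquiv (φ w)) f (μ := μ)).symm
      simpa using this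
    rw [key]
    have h2 : ∀ z, φ w (f z) = f (w * z) := by
      intro z
      show φ w (φ z e) = φ (w * z) e
      rw [map_mul]
      rfl
    calc ∫ z, φ w (f z) ∂μ = ∫ z, f (w * z) ∂μ := by simp_rw [h2]
      _ = ∫ z, f z ∂μ := integral_mul_left_eq_self f w
  -- measure constants
  have hμpos : 0 < (μ Set.univ).toReal := by
    refine ENNReal.toReal_pos ?_ (measure_ne_top μ _)
    exact (isOpen_univ.measure_pos μ Set.univ_nonempty).ne'
  set c : ℝ := (μ Set.univ).toReal with hc
  -- v 0 ≥ c > 0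
  have hv0 : c ≤ v 0 := by
    rw [hcomp 0]
    calc c = ∫ _, (1 : ℝ) ∂μ := by rw [integral_const]; simp [hc, Measure.real]
      _ ≤ ∫ z, f z 0 ∂μ := integral_mono (integrable_const 1) (hinti 0) hpos
  -- the complex-valued tail
  set g : Circle → ℂ := fun z => (f z 1 : ℂ) + (f z 2 : ℂ) * Complex.I with hg
  have hgc : Continuous g := by
    apply Continuous.add
    · exact Complex.continuous_ofReal.comp (hfci 1)
    · exact (Complex.continuous_ofReal.comp (hfci 2)).mul continuous_const
  have hgint : Integrable g μ :=
    hgc.integrable_of_hasCompactSupport (HasCompactSupport.of_compactSpace g)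
  have hgre : (∫ z, g z ∂μ).re = v 1 := by
    have h := ContinuousLinearMap.integral_comp_comm Complex.reCLM hgint
    simp only [Complex.reCLM_apply] at h
    rw [hcomp 1, ← h]
    congr 1
    funext z
    simp [hg]
  have hgim : (∫ z, g z ∂μ).im = v 2 := by
    have h := ContinuousLinearMap.integral_comp_comm Complex.imCLM hgint
    simp only [Complex.imCLM_apply] at h
    rw [hcomp 2, ← h]
    congr 1
    funext z
    simp [hg]
  -- pointwise strict bound ‖g z‖ < f z 0
  have hgnormsq : ∀ z, ‖g z‖ ^ 2 = (f z 1) ^ 2 + (f z 2) ^ 2 := by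
    intro z
    rw [Complex.sq_norm]
    simp [hg, Complex.normSq_apply]
    ring
  have hglt : ∀ z, ‖g z‖ < f z 0 := by
    intro z
    have h1 : ‖g z‖ ^ 2 < (f z 0) ^ 2 := by
      rw [hgnormsq z, hnorm z]; linarith
    have h2 : (0 : ℝ) ≤ f z 0 := le_trans zero_le_one (hpos z)
    exact lt_of_pow_lt_pow_left₀ 2 h2 h1
  -- uniform gap by compactness
  obtain ⟨z₀, -, hz₀⟩ := IsCompact.exists_isMinOn (isCompact_univ (X := Circle))
    ⟨1, Set.mem_univ 1⟩ (Continuous.continuousOn ((hfci 0).sub hgc.norm))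
  set ε : ℝ := f z₀ 0 - ‖g z₀‖ with hε
  have hεpos : 0 < ε := sub_pos.mpr (hglt z₀)
  have hbound : ∫ z, ‖g z‖ ∂μ ≤ v 0 - ε * c := by
    have h1 : ∫ z, ‖g z‖ ∂μ ≤ ∫ z, (f z 0 - ε) ∂μ := by
      apply integral_mono hgint.norm (((hinti 0).sub (integrable_const ε)))
      intro z
      have h2 : f z₀ 0 - ‖g z₀‖ ≤ f z 0 - ‖g z‖ := hz₀ (Set.mem_univ z)
      simp only [Pi.sub_apply]
      linarith
    rw [integral_sub (hinti 0) (integrable_const ε), integral_const, ← hcomp 0] at h1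
    simp only [smul_eq_mul, Measure.real] at h1
    linarith [h1]
  have hnormle : ‖∫ z, g z ∂μ‖ ≤ v 0 - ε * c :=
    le_trans (norm_integral_le_integral_norm g) hbound
  -- conclude v is timelike
  have hεc : 0 < ε * c := mul_pos hεpos hμpos
  have hv0pos : 0 < v 0 := lt_of_lt_of_le hμpos hv0
  have htimelike : eta v v < 0 := by
    have h1 : ‖∫ z, g z ∂μ‖ ^ 2 = (v 1) ^ 2 + (v 2) ^ 2 := by
      rw [Complex.sq_norm, Complex.normSq_apply, hgre, hgim]
      ring
    have h2 : ‖∫ z, g z ∂μ‖ < v 0 := lt_of_le_of_lt hnormle (by linarith)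
    have h3 : (v 1) ^ 2 + (v 2) ^ 2 < (v 0) ^ 2 := by
      rw [← h1]
      have hnn : (0:ℝ) ≤ ‖∫ z, g z ∂μ‖ := norm_nonneg _
      nlinarith
    simp only [eta]
    nlinarith
  -- now the pure algebra
  refine ⟨v, htimelike, hfix, fun w hw hwne => eta_perp_spacelike v w htimelike hw hwne, ?_, ?_⟩
  · intro z w hw
    calc eta v (φ z w) = eta (φ z v) (φ z w) := by rw [hfix z]
      _ = eta v w := hpres z v w
      _ = 0 := hw
  · exact fun x => eta_decomp v x (ne_of_lt htimelike)
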